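/- Let X₁, X₂, … be IID random variables on a standard discrete poset (S, ⪯) with common PDF f having support S, rate function r, and UPF F, and let Y₁, Y₂, … be the associated ladder variables. Then for every n ≥ 1 and every chain y₁ ⪯ y₂ ⪯ ⋯ ⪯ y_n in S, P(Y₁ = y₁, Y₂ = y₂, …, Y_n = y_n) = r(y₁) r(y₂) ⋯ r(y_{n−1}) f(y_n), and this probability is 0 when (y₁, …, y_n) is not an increasing chain. -/

import Mathlib

open scoped ENNReal NNReal
open MeasureTheory ProbabilityTheory

/-- The upper probability function (UPF) of a density `f` on a discrete poset:
`F x = ∑_{t ⪰ x} f t`, computed in `[0,∞]`. -/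
noncomputable def upf {S : Type*} [PartialOrder S] (f : S → ℝ≥0) (x : S) : ℝ≥0∞ :=
  ∑' t : {t : S // x ≤ t}, (f t : ℝ≥0∞)

/-- The ladder times of a sequence `X₀, X₁, X₂, …`: `N₀ = 0` and
`N_{n+1} = min {m > N_n : X_m ⪰ X_{N_n}}` (here indexed from `0`, so `ladderTime X n`
is the `(n+1)`-st ladder time of the paper). -/
noncomputable def ladderTime {Ω S : Type*} [PartialOrder S] (X : ℕ → Ω → S) :
    ℕ → Ω → ℕ
  | 0 => fun _ => 0
  | (n + 1) => fun ω =>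
      sInf {m : ℕ | ladderTime X n ω < m ∧ X (ladderTime X n ω) ω ≤ X m ω}

/-- The ladder variables: `Y_n = X_{N_n}` (indexed from `0`, so `ladderVar X n` is the
`(n+1)`-st ladder variable of the paper). -/
noncomputable def ladderVar {Ω S : Type*} [PartialOrder S] (X : ℕ → Ω → S)
    (n : ℕ) (ω : Ω) : S :=
  X (ladderTime X n ω) ω


section Aux

variable {S : Type*} [PartialOrder S]

/-- Ladder times built from a vector of gaps. -/
def lvTau (K : ℕ) (j : Fin K → ℕ) : ℕ → ℕ
  | 0 => 0
  | k + 1 => lvTau K j k + (if h : k < K then j ⟨k, h⟩ else 0) + 1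

lemma lvTau_lt_succ (K : ℕ) (j : Fin K → ℕ) (k : ℕ) : lvTau K j k < lvTau K j (k + 1) := by
  simp only [lvTau]; omega

lemma lvTau_mono (K : ℕ) (j : Fin K → ℕ) : StrictMono (lvTau K j) :=
  strictMono_nat_of_lt_succ (lvTau_lt_succ K j)

lemma le_lvTau (K : ℕ) (j : Fin K → ℕ) (k : ℕ) : k ≤ lvTau K j k := by
  induction k with
  | zero => exact le_refl _
  | succ k ih => have := lvTau_lt_succ K j k; omega

/-- The window of an index `i`: the largest `k` with `lvTau K j k ≤ i`. -/
def lvWin (K : ℕ) (j : Fin K → ℕ) (i : ℕ) : ℕ :=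
  Nat.findGreatest (fun k => lvTau K j k ≤ i) i

lemma lvWin_le (K : ℕ) (j : Fin K → ℕ) (i : ℕ) : lvTau K j (lvWin K j i) ≤ i :=
  Nat.findGreatest_spec (P := fun k => lvTau K j k ≤ i) (Nat.zero_le i) (Nat.zero_le i)

lemma lt_lvWin_succ (K : ℕ) (j : Fin K → ℕ) (i : ℕ) : i < lvTau K j (lvWin K j i + 1) := by
  by_contra h
  push_neg at h
  exact Nat.findGreatest_is_greatest (Nat.lt_succ_self _) (le_trans (le_lvTau K j _) h) h

lemma lvWin_eq (K : ℕ) (j : Fin K → ℕ) {k i : ℕ} (h1 : lvTau K j k ≤ i)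
    (h2 : i < lvTau K j (k + 1)) : lvWin K j i = k := by
  have ha : k ≤ lvWin K j i := Nat.le_findGreatest (le_trans (le_lvTau K j k) h1) h1
  have hb : lvTau K j (lvWin K j i) ≤ i := lvWin_le K j i
  by_contra h
  have hk : k + 1 ≤ lvWin K j i := by omega
  have := (lvTau_mono K j).monotone hk
  omega

/-- The constraint set at index `i`. -/
def lvB (y : ℕ → S) (K : ℕ) (j : Fin K → ℕ) (i : ℕ) : Set S :=
  if lvTau K j (lvWin K j i) = i then {y (lvWin K j i)}
  else {t | ¬ y (lvWin K j i) ≤ t}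

/-- The elementary event corresponding to a gap vector. -/
def lvE {Ω : Type*} (X : ℕ → Ω → S) (y : ℕ → S) (K : ℕ) (j : Fin K → ℕ) : Set Ω :=
  ⋂ i ∈ Finset.range (lvTau K j K + 1), X i ⁻¹' lvB y K j i

lemma mem_lvE {Ω : Type*} {X : ℕ → Ω → S} {y : ℕ → S} {K : ℕ} {j : Fin K → ℕ} {ω : Ω} :
    ω ∈ lvE X y K j ↔ ∀ i ≤ lvTau K j K, X i ω ∈ lvB y K j i := by
  simp [lvE, Nat.lt_succ_iff]

lemma lvE_val {Ω : Type*} {X : ℕ → Ω → S} {y : ℕ → S} {K : ℕ} {j : Fin K → ℕ} {ω : Ω}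
    (hω : ω ∈ lvE X y K j) {k : ℕ} (hk : k ≤ K) : X (lvTau K j k) ω = y k := by
  have h1 := mem_lvE.1 hω (lvTau K j k) ((lvTau_mono K j).monotone hk)
  have hwin : lvWin K j (lvTau K j k) = k :=
    lvWin_eq K j (le_refl _) (lvTau_lt_succ K j k)
  rw [lvB, hwin, if_pos rfl] at h1
  exact h1

end Aux

section Aux2

variable {S : Type*} [PartialOrder S] {Ω : Type*}

lemma ladderTime_succ (X : ℕ → Ω → S) (n : ℕ) (ω : Ω) :
    ladderTime X (n + 1) ω
      = sInf {m : ℕ | ladderTime X n ω < m ∧ X (ladderTime X n ω) ω ≤ X m ω} := rfl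

lemma lvE_ladder {X : ℕ → Ω → S} {y : ℕ → S} {K : ℕ} {j : Fin K → ℕ} {ω : Ω}
    (hchain : ∀ k, k < K → y k ≤ y (k + 1)) (hω : ω ∈ lvE X y K j) :
    ∀ k, k ≤ K → ladderTime X k ω = lvTau K j k := by
  intro k hk
  induction k with
  | zero => rfl
  | succ k ih =>
    have hk' : k ≤ K := Nat.le_of_succ_le hk
    have hN := ih hk'
    have hX : X (lvTau K j k) ω = y k := lvE_val hω hk'
    have hset : ladderTime X (k + 1) ω = sInf {m : ℕ | lvTau K j k < m ∧ y k ≤ X m ω} := by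
      rw [ladderTime_succ, hN, hX]
    have hmem : lvTau K j (k + 1) ∈ {m : ℕ | lvTau K j k < m ∧ y k ≤ X m ω} := by
      refine ⟨lvTau_lt_succ K j k, ?_⟩
      rw [lvE_val hω hk]
      exact hchain k (Nat.lt_of_succ_le hk)
    have hlb : ∀ m ∈ {m : ℕ | lvTau K j k < m ∧ y k ≤ X m ω}, lvTau K j (k + 1) ≤ m := by
      rintro m ⟨hm1, hm2⟩
      by_contra h
      push_neg at h
      have hwin : lvWin K j m = k := lvWin_eq K j (le_of_lt hm1) h
      have hm3 : m ≤ lvTau K j K := le_trans (le_of_lt h) ((lvTau_mono K j).monotone hk)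
      have h4 := mem_lvE.1 hω m hm3
      rw [lvB, hwin, if_neg (Nat.ne_of_lt hm1)] at h4
      exact h4 hm2
    rw [hset]
    exact le_antisymm (Nat.sInf_le hmem) (le_csInf ⟨_, hmem⟩ hlb)

lemma lvE_subset_target {X : ℕ → Ω → S} {y : ℕ → S} {K : ℕ} {j : Fin K → ℕ} {ω : Ω}
    (hchain : ∀ k, k < K → y k ≤ y (k + 1)) (hω : ω ∈ lvE X y K j) :
    ∀ k, k ≤ K → ladderVar X k ω = y k := by
  intro k hk
  rw [ladderVar, lvE_ladder hchain hω k hk]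
  exact lvE_val hω hk

lemma lvE_disjoint {X : ℕ → Ω → S} {y : ℕ → S} {K : ℕ}
    (hchain : ∀ k, k < K → y k ≤ y (k + 1)) :
    Pairwise (Function.onFun Disjoint fun j : Fin K → ℕ => lvE X y K j) := by
  intro j j' hne
  rw [Function.onFun, Set.disjoint_left]
  intro ω hω hω'
  apply hne
  have htau : ∀ k, k ≤ K → lvTau K j k = lvTau K j' k := by
    intro k hk
    rw [← lvE_ladder hchain hω k hk, ← lvE_ladder hchain hω' k hk]
  funext k
  have h1 := htau (k + 1) k.isLt
  have h2 := htau k (le_of_lt k.isLt)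
  simp only [lvTau, dif_pos k.isLt, Fin.eta] at h1
  omega

/-- The bad (null) event: from time `m + 1` on, nothing ever dominates `z`. -/
def lvA (X : ℕ → Ω → S) (z : S) (m : ℕ) : Set Ω :=
  ⋂ l : ℕ, X (m + 1 + l) ⁻¹' {t | ¬ z ≤ t}

lemma target_subset {X : ℕ → Ω → S} {y : ℕ → S} {K : ℕ} {ω : Ω}
    (hω : ∀ k, k ≤ K → ladderVar X k ω = y k) :
    (∃ j : Fin K → ℕ, ω ∈ lvE X y K j) ∨ (∃ k m, k < K ∧ ω ∈ lvA X (y k) m) := by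
  by_cases hgood : ∀ k, k < K →
      {m : ℕ | ladderTime X k ω < m ∧ X (ladderTime X k ω) ω ≤ X m ω}.Nonempty
  · left
    set N : ℕ → ℕ := fun k => ladderTime X k ω with hNdef
    have hNsucc : ∀ k, k < K → N (k + 1) =
        sInf {m : ℕ | N k < m ∧ X (N k) ω ≤ X m ω} := fun k _ => ladderTime_succ X k ω
    have hNlt : ∀ k, k < K → N k < N (k + 1) := by
      intro k hk
      have := Nat.sInf_mem (hgood k hk)
      rw [← hNsucc k hk] at this
      exact this.1
    refine ⟨fun k => N (k + 1) - N k - 1, ?_⟩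
    set j : Fin K → ℕ := fun k => N (k + 1) - N k - 1 with hjdef
    have htau : ∀ k, k ≤ K → lvTau K j k = N k := by
      intro k hk
      induction k with
      | zero => rfl
      | succ k ih =>
        have hk' : k < K := Nat.lt_of_succ_le hk
        have h1 := ih (le_of_lt hk')
        have h2 := hNlt k hk'
        simp only [lvTau, dif_pos hk', h1]
        simp only [hjdef]
        omega
    rw [mem_lvE]
    intro i hi
    set k := lvWin K j i with hkdef
    have hs1 : lvTau K j k ≤ i := lvWin_le K j i
    have hs2 : i < lvTau K j (k + 1) := lt_lvWin_succ K j i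
    have hkK : k ≤ K := by
      by_contra h
      push_neg at h
      have h1 := (lvTau_mono K j).monotone (Nat.succ_le_of_lt h)
      have h2 := lvTau_lt_succ K j K
      simp only [Nat.succ_eq_add_one] at h1
      omega
    rw [lvB, ← hkdef]
    by_cases heq : lvTau K j k = i
    · rw [if_pos heq, ← heq, htau k hkK]
      exact Set.mem_singleton_iff.2 (hω k hkK)
    · rw [if_neg heq]
      have hklt : k < K := by
        rcases Nat.lt_or_ge k K with h | h
        · exact h
        · exfalso
          have hkK' : k = K := le_antisymm hkK h
          rw [htau k hkK, hkK'] at hs1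
          rw [htau K (le_refl K)] at hi
          have : lvTau K j k ≠ i := heq
          rw [htau k hkK, hkK'] at this
          omega
      have hlt : lvTau K j k < i := lt_of_le_of_ne hs1 heq
      rw [htau k hkK] at hlt
      rw [htau (k + 1) hklt] at hs2
      have hnot : i ∉ {m : ℕ | N k < m ∧ X (N k) ω ≤ X m ω} := by
        rw [hNsucc k hklt] at hs2
        exact Nat.notMem_of_lt_sInf hs2
      intro hyX
      apply hnot
      refine ⟨hlt, ?_⟩
      have : X (N k) ω = y k := hω k hkK
      rw [this]
      exact hyX
  · right
    push_neg at hgood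
    obtain ⟨k, hk, hempty⟩ := hgood
    refine ⟨k, ladderTime X k ω, hk, ?_⟩
    rw [lvA, Set.mem_iInter]
    intro l
    intro hyX
    have : ladderTime X k ω + 1 + l ∈
        {m : ℕ | ladderTime X k ω < m ∧ X (ladderTime X k ω) ω ≤ X m ω} := by
      refine ⟨by omega, ?_⟩
      have hval : X (ladderTime X k ω) ω = y k := hω k (le_of_lt hk)
      rw [hval]
      exact hyX
    rw [hempty] at this
    exact this

end Aux2
section Aux3

variable {S : Type*} [Countable S] [PartialOrder S] [MeasurableSpace S]
  [MeasurableSingletonClass S]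
  {Ω : Type*} [MeasurableSpace Ω] {P : Measure Ω} [IsProbabilityMeasure P]
  {f : S → ℝ≥0} {X : ℕ → Ω → S}

lemma measurableSet_all (B : Set S) : MeasurableSet B :=
  (Set.to_countable B).measurableSet

lemma meas_pre (hmeas : ∀ i, Measurable (X i))
    (hdist : ∀ i (x : S), P (X i ⁻¹' {x}) = (f x : ℝ≥0∞)) (i : ℕ) (B : Set S) :
    P (X i ⁻¹' B) = ∑' b : B, (f b : ℝ≥0∞) := by
  have h : X i ⁻¹' B = ⋃ b : B, X i ⁻¹' {(b : S)} := by
    ext ω; simp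
  rw [h, measure_iUnion ?_ fun b => hmeas i (measurableSet_singleton _)]
  · simp only [hdist]
  · intro b b' hbb'
    simp only [Function.onFun]
    rw [Set.disjoint_left]
    intro ω h1 h2
    simp only [Set.mem_preimage, Set.mem_singleton_iff] at h1 h2
    exact hbb' (Subtype.ext (by rw [← h1, ← h2]))

lemma meas_pre_le (hmeas : ∀ i, Measurable (X i))
    (hdist : ∀ i (x : S), P (X i ⁻¹' {x}) = (f x : ℝ≥0∞)) (i : ℕ) (x : S) :
    P (X i ⁻¹' {t | x ≤ t}) = upf f x := by
  rw [meas_pre hmeas hdist i _]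
  rfl

lemma le_upf (f : S → ℝ≥0) (x : S) : (f x : ℝ≥0∞) ≤ upf f x :=
  ENNReal.le_tsum (⟨x, le_refl x⟩ : {t : S // x ≤ t})

lemma upf_ne_zero (hsupp : ∀ x : S, 0 < f x) (x : S) : upf f x ≠ 0 :=
  ne_of_gt (lt_of_lt_of_le (ENNReal.coe_pos.2 (hsupp x)) (le_upf f x))

lemma upf_le_one (hpdf : ∑' x : S, (f x : ℝ≥0∞) = 1) (x : S) : upf f x ≤ 1 := by
  rw [← hpdf, upf]
  exact ENNReal.tsum_comp_le_tsum_of_injective Subtype.val_injective _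

lemma meas_pre_not (hmeas : ∀ i, Measurable (X i))
    (hdist : ∀ i (x : S), P (X i ⁻¹' {x}) = (f x : ℝ≥0∞)) (i : ℕ) (x : S) :
    P (X i ⁻¹' {t | ¬ x ≤ t}) = 1 - upf f x := by
  have hc : {t : S | ¬ x ≤ t} = {t : S | x ≤ t}ᶜ := rfl
  rw [hc, Set.preimage_compl,
    measure_compl (hmeas i (measurableSet_all _)) (measure_ne_top P _),
    measure_univ, meas_pre_le hmeas hdist i x]

lemma lvA_null (hmeas : ∀ i, Measurable (X i))
    (hindep : iIndepFun X P)
    (hdist : ∀ i (x : S), P (X i ⁻¹' {x}) = (f x : ℝ≥0∞))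
    (hsupp : ∀ x : S, 0 < f x) (z : S) (m : ℕ) :
    P (lvA X z m) = 0 := by
  have hlt : (1 : ℝ≥0∞) - upf f z < 1 :=
    ENNReal.sub_lt_self ENNReal.one_ne_top one_ne_zero (upf_ne_zero hsupp z)
  have hbound : ∀ L : ℕ, P (lvA X z m) ≤ (1 - upf f z) ^ L := by
    intro L
    have hsub : lvA X z m ⊆
        ⋂ i ∈ (Finset.range L).image (fun l => m + 1 + l), X i ⁻¹' {t | ¬ z ≤ t} := by
      intro ω hω
      simp only [Set.mem_iInter, Finset.mem_image, Finset.mem_range]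
      intro i hi
      obtain ⟨l, hl, rfl⟩ := hi
      exact Set.mem_iInter.1 hω l
    refine le_trans (measure_mono hsub) ?_
    rw [hindep.meas_biInter (fun i _ => ⟨{t | ¬ z ≤ t}, measurableSet_all _, rfl⟩)]
    rw [Finset.prod_image (by intro a _ b _ h; simp only at h; omega)]
    rw [Finset.prod_congr rfl (fun l _ => meas_pre_not hmeas hdist _ z),
      Finset.prod_const, Finset.card_range]
  exact le_antisymm
    (ge_of_tendsto' (ENNReal.tendsto_pow_atTop_nhds_zero_of_lt_one hlt) hbound)
    zero_le

lemma lvE_meas (hmeas : ∀ i, Measurable (X i))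
    (hindep : iIndepFun X P)
    (hdist : ∀ i (x : S), P (X i ⁻¹' {x}) = (f x : ℝ≥0∞))
    (y : ℕ → S) (K : ℕ) (j : Fin K → ℕ) :
    P (lvE X y K j) = (f (y 0) : ℝ≥0∞) *
      ∏ k : Fin K, ((1 - upf f (y (k : ℕ))) ^ (j k) * (f (y ((k : ℕ) + 1)) : ℝ≥0∞)) := by
  set q : ℕ → ℝ≥0∞ := fun i => P (X i ⁻¹' lvB y K j i) with hq
  have hstep1 : P (lvE X y K j) = ∏ i ∈ Finset.range (lvTau K j K + 1), q i := by
    rw [lvE, hindep.meas_biInter (fun i _ => ⟨lvB y K j i, measurableSet_all _, rfl⟩)]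
  have hblocks : ∀ d : ℕ, ∏ i ∈ Finset.range (lvTau K j d + 1), q i
      = q 0 * ∏ k ∈ Finset.range d,
          ∏ l ∈ Finset.Ico (lvTau K j k + 1) (lvTau K j (k + 1) + 1), q l := by
    intro d
    induction d with
    | zero => simp [lvTau]
    | succ d ih =>
      rw [← Finset.prod_range_mul_prod_Ico q
        (Nat.succ_le_succ (le_of_lt (lvTau_lt_succ K j d))), ih,
        Finset.prod_range_succ, mul_assoc]
  have hq0 : q 0 = (f (y 0) : ℝ≥0∞) := by
    have hwin : lvWin K j 0 = 0 := lvWin_eq K j (Nat.le_refl _) (lvTau_lt_succ K j 0)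
    rw [hq]
    simp only [lvB, hwin, if_pos rfl]
    exact hdist 0 (y 0)
  have hinner : ∀ (k : ℕ) (hk : k < K),
      ∏ l ∈ Finset.Ico (lvTau K j k + 1) (lvTau K j (k + 1) + 1), q l
        = (1 - upf f (y k)) ^ (j ⟨k, hk⟩) * (f (y (k + 1)) : ℝ≥0∞) := by
    intro k hk
    rw [Finset.prod_Ico_succ_top (Nat.succ_le_of_lt (lvTau_lt_succ K j k))]
    have hqtop : q (lvTau K j (k + 1)) = (f (y (k + 1)) : ℝ≥0∞) := by
      have hwin : lvWin K j (lvTau K j (k + 1)) = k + 1 :=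
        lvWin_eq K j (le_refl _) (lvTau_lt_succ K j (k + 1))
      rw [hq]
      simp only [lvB, hwin, if_pos rfl]
      exact hdist _ (y (k + 1))
    have hqmid : ∀ l ∈ Finset.Ico (lvTau K j k + 1) (lvTau K j (k + 1)),
        q l = 1 - upf f (y k) := by
      intro l hl
      rw [Finset.mem_Ico] at hl
      have hwin : lvWin K j l = k := lvWin_eq K j (by omega) hl.2
      rw [hq]
      simp only [lvB, hwin, if_neg (by omega : ¬ lvTau K j k = l)]
      exact meas_pre_not hmeas hdist l (y k)
    rw [Finset.prod_congr rfl hqmid, Finset.prod_const, Nat.card_Ico, hqtop]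
    congr 2
    simp only [lvTau, dif_pos hk]
    omega
  rw [hstep1, hblocks K, hq0,
    ← Fin.prod_univ_eq_prod_range
      (fun k => ∏ l ∈ Finset.Ico (lvTau K j k + 1) (lvTau K j (k + 1) + 1), q l) K]
  congr 1
  refine Finset.prod_congr rfl fun k _ => ?_
  rw [hinner k k.isLt]

end Aux3
section Aux4

lemma tsum_pi_prod : ∀ (K : ℕ) (g : ℕ → ℕ → ℝ≥0∞),
    ∑' j : Fin K → ℕ, ∏ k : Fin K, g (k : ℕ) (j k) = ∏ k : Fin K, ∑' m : ℕ, g (k : ℕ) m := by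
  intro K
  induction K with
  | zero =>
    intro g
    simp only [Finset.univ_eq_empty, Finset.prod_empty]
    exact tsum_eq_single (fun k => k.elim0) (fun b hb => absurd (Subsingleton.elim b _) hb)
  | succ K ih =>
    intro g
    have he := Equiv.tsum_eq (Fin.consEquiv (fun _ : Fin (K + 1) => ℕ))
      (fun j : Fin (K + 1) → ℕ => ∏ k : Fin (K + 1), g (k : ℕ) (j k))
    rw [← he, ENNReal.tsum_prod']
    have hinner : ∀ (m : ℕ) (j' : Fin K → ℕ),
        ∏ k : Fin (K + 1), g (k : ℕ) ((Fin.consEquiv (fun _ => ℕ)) (m, j') k)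
          = g 0 m * ∏ k : Fin K, g ((k : ℕ) + 1) (j' k) := by
      intro m j'
      simp [Fin.prod_univ_succ, Fin.consEquiv]
    calc (∑' (m : ℕ) (j' : Fin K → ℕ),
            ∏ k : Fin (K + 1), g (k : ℕ) ((Fin.consEquiv (fun _ => ℕ)) (m, j') k))
        = ∑' (m : ℕ) (j' : Fin K → ℕ), g 0 m * ∏ k : Fin K, g ((k : ℕ) + 1) (j' k) := by
          congr 1; funext m; congr 1; funext j'; exact hinner m j'
      _ = ∑' (m : ℕ), g 0 m * ∑' j' : Fin K → ℕ, ∏ k : Fin K, g ((k : ℕ) + 1) (j' k) := by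
          congr 1; funext m; exact ENNReal.tsum_mul_left
      _ = (∑' (m : ℕ), g 0 m) * ∑' j' : Fin K → ℕ, ∏ k : Fin K, g ((k : ℕ) + 1) (j' k) :=
          ENNReal.tsum_mul_right
      _ = ∏ k : Fin (K + 1), ∑' m : ℕ, g (k : ℕ) m := by
          rw [ih (fun k m => g (k + 1) m), Fin.prod_univ_succ]
          simp

end Aux4
/-- For an IID sequence with common PDF `f` (support `S`) on a
standard discrete poset, the ladder variables satisfy
`P(Y₁ = y₁, …, Y_n = y_n) = r(y₁) ⋯ r(y_{n−1}) f(y_n)` for every increasing chain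
`y₁ ⪯ ⋯ ⪯ y_n`, where `r = f / F` is the rate function; the probability vanishes for
non-chains. -/
theorem ladderVar_joint_pdf
    {S : Type*} [Countable S] [PartialOrder S] [MeasurableSpace S]
    [MeasurableSingletonClass S]
    (hfin : ∀ x : S, {t : S | t ≤ x}.Finite)
    {Ω : Type*} [MeasurableSpace Ω] (P : Measure Ω) [IsProbabilityMeasure P]
    (f : S → ℝ≥0)
    (hsupp : ∀ x : S, 0 < f x)
    (hpdf : ∑' x : S, (f x : ℝ≥0∞) = 1)
    (X : ℕ → Ω → S)
    (hmeas : ∀ i, Measurable (X i))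
    (hindep : iIndepFun X P)
    (hdist : ∀ i (x : S), P (X i ⁻¹' {x}) = (f x : ℝ≥0∞))
    (n : ℕ) (hn : 1 ≤ n) (y : ℕ → S) :
    ((∀ i, i + 1 < n → y i ≤ y (i + 1)) →
      P {ω | ∀ i < n, ladderVar X i ω = y i}
        = (∏ i ∈ Finset.range (n - 1), ((f (y i) : ℝ≥0∞) / upf f (y i)))
            * (f (y (n - 1)) : ℝ≥0∞)) ∧
    ((¬ ∀ i, i + 1 < n → y i ≤ y (i + 1)) →
      P {ω | ∀ i < n, ladderVar X i ω = y i} = 0) := by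
  obtain ⟨K, rfl⟩ : ∃ K, n = K + 1 := ⟨n - 1, by omega⟩
  simp only [Nat.add_sub_cancel]
  constructor
  · intro hchain
    have hchain' : ∀ k, k < K → y k ≤ y (k + 1) := fun k hk => hchain k (by omega)
    have hBadnull : P (⋃ (k : ℕ), ⋃ (m : ℕ), lvA X (y k) m) = 0 :=
      measure_iUnion_null fun k =>
        measure_iUnion_null fun m => lvA_null hmeas hindep hdist hsupp (y k) m
    have hUsub : (⋃ j : Fin K → ℕ, lvE X y K j)
        ⊆ {ω | ∀ i < K + 1, ladderVar X i ω = y i} := by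
      intro ω hω
      obtain ⟨j, hj⟩ := Set.mem_iUnion.1 hω
      simp only [Set.mem_setOf_eq]
      intro i hi
      exact lvE_subset_target hchain' hj i (by omega)
    have hsub2 : {ω | ∀ i < K + 1, ladderVar X i ω = y i}
        ⊆ (⋃ j : Fin K → ℕ, lvE X y K j) ∪ ⋃ (k : ℕ), ⋃ (m : ℕ), lvA X (y k) m := by
      intro ω hω
      simp only [Set.mem_setOf_eq] at hω
      rcases target_subset (X := X) (y := y) (K := K) (fun k hk => hω k (by omega)) with
        ⟨j, hj⟩ | ⟨k, m, hk, hm⟩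
      · exact Or.inl (Set.mem_iUnion.2 ⟨j, hj⟩)
      · exact Or.inr (Set.mem_iUnion.2 ⟨k, Set.mem_iUnion.2 ⟨m, hm⟩⟩)
    have hPeq : P {ω | ∀ i < K + 1, ladderVar X i ω = y i}
        = P (⋃ j : Fin K → ℕ, lvE X y K j) := by
      refine le_antisymm ?_ (measure_mono hUsub)
      calc P {ω | ∀ i < K + 1, ladderVar X i ω = y i}
          ≤ P ((⋃ j : Fin K → ℕ, lvE X y K j) ∪ ⋃ (k : ℕ), ⋃ (m : ℕ), lvA X (y k) m) :=
            measure_mono hsub2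
        _ ≤ P (⋃ j : Fin K → ℕ, lvE X y K j) + P (⋃ (k : ℕ), ⋃ (m : ℕ), lvA X (y k) m) :=
            measure_union_le _ _
        _ = P (⋃ j : Fin K → ℕ, lvE X y K j) := by rw [hBadnull, add_zero]
    have hmeasE : ∀ j : Fin K → ℕ, MeasurableSet (lvE X y K j) := fun j =>
      Finset.measurableSet_biInter _ fun i _ => hmeas i (measurableSet_all _)
    rw [hPeq, measure_iUnion (lvE_disjoint hchain') hmeasE]
    have hgeo : ∀ k : ℕ,
        (∑' m : ℕ, (1 - upf f (y k)) ^ m * (f (y (k + 1)) : ℝ≥0∞))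
          = (f (y (k + 1)) : ℝ≥0∞) * (upf f (y k))⁻¹ := by
      intro k
      rw [ENNReal.tsum_mul_right, ENNReal.tsum_geometric,
        ENNReal.sub_sub_cancel ENNReal.one_ne_top (upf_le_one hpdf (y k)), mul_comm]
    calc (∑' j : Fin K → ℕ, P (lvE X y K j))
        = ∑' j : Fin K → ℕ, (f (y 0) : ℝ≥0∞) *
            ∏ k : Fin K, ((1 - upf f (y (k : ℕ))) ^ (j k) * (f (y ((k : ℕ) + 1)) : ℝ≥0∞)) :=
          tsum_congr (lvE_meas hmeas hindep hdist y K)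
      _ = (f (y 0) : ℝ≥0∞) * ∑' j : Fin K → ℕ,
            ∏ k : Fin K, ((1 - upf f (y (k : ℕ))) ^ (j k) * (f (y ((k : ℕ) + 1)) : ℝ≥0∞)) :=
          ENNReal.tsum_mul_left
      _ = (f (y 0) : ℝ≥0∞) * ∏ k : Fin K,
            ∑' m : ℕ, (1 - upf f (y (k : ℕ))) ^ m * (f (y ((k : ℕ) + 1)) : ℝ≥0∞) := by
          rw [tsum_pi_prod K (fun k m => (1 - upf f (y k)) ^ m * (f (y (k + 1)) : ℝ≥0∞))]
      _ = (f (y 0) : ℝ≥0∞) * ∏ k : Fin K,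
            ((f (y ((k : ℕ) + 1)) : ℝ≥0∞) * (upf f (y (k : ℕ)))⁻¹) :=
          congrArg _ (Finset.prod_congr rfl fun k _ => hgeo (k : ℕ))
      _ = (∏ i ∈ Finset.range K, ((f (y i) : ℝ≥0∞) / upf f (y i))) * (f (y K) : ℝ≥0∞) := by
          rw [Fin.prod_univ_eq_prod_range
            (fun k => (f (y (k + 1)) : ℝ≥0∞) * (upf f (y k))⁻¹) K]
          simp only [div_eq_mul_inv]
          rw [Finset.prod_mul_distrib, Finset.prod_mul_distrib]
          have hshift : (f (y 0) : ℝ≥0∞) * ∏ k ∈ Finset.range K, (f (y (k + 1)) : ℝ≥0∞)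
              = (∏ i ∈ Finset.range K, (f (y i) : ℝ≥0∞)) * (f (y K) : ℝ≥0∞) := by
            rw [mul_comm, ← Finset.prod_range_succ' (fun i => (f (y i) : ℝ≥0∞)) K,
              Finset.prod_range_succ]
          calc (f (y 0) : ℝ≥0∞) * ((∏ k ∈ Finset.range K, (f (y (k + 1)) : ℝ≥0∞)) *
                  ∏ k ∈ Finset.range K, (upf f (y k))⁻¹)
              = ((f (y 0) : ℝ≥0∞) * ∏ k ∈ Finset.range K, (f (y (k + 1)) : ℝ≥0∞)) *
                  ∏ k ∈ Finset.range K, (upf f (y k))⁻¹ := by ring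
            _ = ((∏ i ∈ Finset.range K, (f (y i) : ℝ≥0∞)) * (f (y K) : ℝ≥0∞)) *
                  ∏ k ∈ Finset.range K, (upf f (y k))⁻¹ := by rw [hshift]
            _ = ((∏ i ∈ Finset.range K, (f (y i) : ℝ≥0∞)) *
                  ∏ i ∈ Finset.range K, (upf f (y i))⁻¹) * (f (y K) : ℝ≥0∞) := by ring
  · intro hnot
    push_neg at hnot
    obtain ⟨i, hi, hni⟩ := hnot
    refine measure_mono_null ?_
      (measure_iUnion_null fun m => lvA_null hmeas hindep hdist hsupp (y i) m)
    intro ω hω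
    simp only [Set.mem_setOf_eq] at hω
    have hYi : X (ladderTime X i ω) ω = y i := hω i (by omega)
    by_cases hne : {m0 : ℕ | ladderTime X i ω < m0 ∧
        X (ladderTime X i ω) ω ≤ X m0 ω}.Nonempty
    · exfalso
      have hmem := Nat.sInf_mem hne
      have hYi1 : X (ladderTime X (i + 1) ω) ω = y (i + 1) := hω (i + 1) hi
      apply hni
      rw [← hYi, ← hYi1, ladderTime_succ]
      exact hmem.2
    · refine Set.mem_iUnion.2 ⟨ladderTime X i ω, ?_⟩
      rw [lvA, Set.mem_iInter]
      intro l
      intro hyX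
      exact hne ⟨ladderTime X i ω + 1 + l, by omega, by rw [hYi]; exact hyX⟩
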